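/- Let R be a commutative ring, u ≥ 0, 0 ≤ k ≤ u, and B = R[z₁,...,z_u]/(z₁²,...,z_u²) graded with each z_i in degree −2, a Γ_R(y)-module via y^{[m]} ↦ Σ_{|S|=m} z_S. Then every monomial z_T with |T| ≥ (u+k)/2 lies in the Γ_R(y)-submodule generated by the monomials z_S with |S| ≤ (u−k)/2. -/

import Mathlib

open Finset

noncomputable section

/-- `B R u = R[z₁,…,z_u]/(z₁²,…,z_u²)`. -/
abbrev SqZeroAlg (R : Type*) [CommRing R] (u : ℕ) : Type _ :=
  MvPolynomial (Fin u) R ⧸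
    Ideal.span (Set.range fun i : Fin u => (MvPolynomial.X i : MvPolynomial (Fin u) R) ^ 2)

def zvar (R : Type*) [CommRing R] (u : ℕ) (i : Fin u) : SqZeroAlg R u :=
  Ideal.Quotient.mk _ (MvPolynomial.X i)

def zmon (R : Type*) [CommRing R] (u : ℕ) (S : Finset (Fin u)) : SqZeroAlg R u :=
  ∏ i ∈ S, zvar R u i

/-- `y^{[m]} = Σ_{|S|=m} z_S`. -/
def ysym (R : Type*) [CommRing R] (u : ℕ) (m : ℕ) : SqZeroAlg R u :=
  ∑ S ∈ Finset.powersetCard m (Finset.univ : Finset (Fin u)), zmon R u S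

lemma zvar_sq (R : Type*) [CommRing R] (u : ℕ) (i : Fin u) :
    zvar R u i ^ 2 = 0 := by
  unfold zvar
  rw [← map_pow, Ideal.Quotient.eq_zero_iff_mem]
  exact Ideal.subset_span ⟨i, rfl⟩

lemma zmon_mul_disj (R : Type*) [CommRing R] (u : ℕ) {A S : Finset (Fin u)}
    (h : Disjoint A S) : zmon R u A * zmon R u S = zmon R u (A ∪ S) := by
  rw [zmon, zmon, zmon, ← Finset.prod_union h]

lemma zmon_mul_ndisj (R : Type*) [CommRing R] (u : ℕ) {A S : Finset (Fin u)}
    (h : ¬ Disjoint A S) : zmon R u A * zmon R u S = 0 := by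
  rw [Finset.not_disjoint_iff] at h
  obtain ⟨i, hiA, hiS⟩ := h
  rw [zmon, zmon, ← Finset.prod_erase_mul _ _ hiA, ← Finset.prod_erase_mul _ _ hiS]
  have : (∏ j ∈ A.erase i, zvar R u j) * zvar R u i *
      ((∏ j ∈ S.erase i, zvar R u j) * zvar R u i)
      = (∏ j ∈ A.erase i, zvar R u j) * (∏ j ∈ S.erase i, zvar R u j) * zvar R u i ^ 2 := by
    ring
  rw [this, zvar_sq, mul_zero]

lemma ysym_mul_zmon (R : Type*) [CommRing R] (u m : ℕ) (S : Finset (Fin u)) :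
    ysym R u m * zmon R u S =
      ∑ T' ∈ (Finset.powersetCard (m + S.card) (Finset.univ : Finset (Fin u))).filter
        (fun T' => S ⊆ T'), zmon R u T' := by
  classical
  rw [ysym, Finset.sum_mul]
  rw [← Finset.sum_filter_add_sum_filter_not _ (fun A => Disjoint A S)]
  have h0 : ∑ A ∈ (Finset.powersetCard m (Finset.univ : Finset (Fin u))).filter
      (fun A => ¬ Disjoint A S), zmon R u A * zmon R u S = 0 := by
    refine Finset.sum_eq_zero fun A hA => ?_
    exact zmon_mul_ndisj R u (Finset.mem_filter.mp hA).2
  rw [h0, add_zero]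
  refine Finset.sum_bij (fun A _ => A ∪ S) ?_ ?_ ?_ ?_
  · intro A hA
    rw [Finset.mem_filter, Finset.mem_powersetCard] at hA
    obtain ⟨⟨_, hcard⟩, hd⟩ := hA
    rw [Finset.mem_filter, Finset.mem_powersetCard]
    exact ⟨⟨Finset.subset_univ _, by rw [Finset.card_union_of_disjoint hd, hcard]⟩,
      Finset.subset_union_right⟩
  · intro A hA B hB hAB
    rw [Finset.mem_filter] at hA hB
    have hAB' : A ∪ S = B ∪ S := hAB
    have : (A ∪ S) \ S = (B ∪ S) \ S := by rw [hAB']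
    rwa [Finset.union_sdiff_cancel_right hA.2, Finset.union_sdiff_cancel_right hB.2] at this
  · intro T' hT'
    rw [Finset.mem_filter, Finset.mem_powersetCard] at hT'
    obtain ⟨⟨_, hcard⟩, hsub⟩ := hT'
    refine ⟨T' \ S, ?_, ?_⟩
    · rw [Finset.mem_filter, Finset.mem_powersetCard]
      refine ⟨⟨Finset.subset_univ _, ?_⟩, Finset.sdiff_disjoint⟩
      rw [Finset.card_sdiff_of_subset hsub, hcard]
      omega
    · rw [Finset.sdiff_union_of_subset hsub]
  · intro A hA
    exact zmon_mul_disj R u (Finset.mem_filter.mp hA).2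

lemma neg_one_pow_sum {α : Type*} [DecidableEq α] (R : Type*) [CommRing R] (x : Finset α) :
    (∑ S ∈ x.powerset, (-1 : R) ^ S.card) = if x = ∅ then 1 else 0 := by
  have h := Finset.sum_powerset_neg_one_pow_card (x := x)
  have h2 := congrArg (Int.cast : ℤ → R) h
  push_cast at h2
  split_ifs with he <;> simp [he] at h2 ⊢ <;> exact h2

/-- **Hard Lefschetz for `B R u`.**  With each `z_i` in degree `−2` (so `z_S` has degree
`−2|S|`), every monomial `z_T` of degree at most `−(u+k)` (i.e. `|T| ≥ (u+k)/2`) lies in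
the `Γ_R(y)`-submodule generated by the monomials `z_S` of degree at least `−(u−k)`
(i.e. `2|S| ≤ u−k`). -/
theorem statement9 (R : Type*) [CommRing R] (u k : ℕ) (hk : k ≤ u)
    (T : Finset (Fin u)) (hT : u + k ≤ 2 * T.card) :
    zmon R u T ∈
      Submodule.span R
        {x : SqZeroAlg R u | ∃ (m : ℕ) (S : Finset (Fin u)),
          2 * S.card ≤ u - k ∧ x = ysym R u m * zmon R u S} := by
  classical
  set t := T.card with ht
  have hTc : Tᶜ.card = u - t := by
    rw [Finset.card_compl, Fintype.card_fin]
  have htu : t ≤ u := by simpa using Finset.card_le_card (Finset.subset_univ T)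
  have hcard : ∀ S ∈ Tᶜ.powerset, t - S.card + S.card = t := by
    intro S hS
    have h1 := Finset.card_le_card (Finset.mem_powerset.mp hS)
    rw [hTc] at h1
    omega
  have key : (∑ S ∈ Tᶜ.powerset, (-1 : R) ^ S.card • (ysym R u (t - S.card) * zmon R u S))
      = zmon R u T := by
    calc ∑ S ∈ Tᶜ.powerset, (-1 : R) ^ S.card • (ysym R u (t - S.card) * zmon R u S)
        = ∑ S ∈ Tᶜ.powerset, ∑ T' ∈ Finset.powersetCard t (Finset.univ : Finset (Fin u)),
            (if S ⊆ T' then (-1 : R) ^ S.card • zmon R u T' else 0) := by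
          refine Finset.sum_congr rfl fun S hS => ?_
          rw [ysym_mul_zmon, hcard S hS, Finset.smul_sum, Finset.sum_filter]
      _ = ∑ T' ∈ Finset.powersetCard t (Finset.univ : Finset (Fin u)),
            ∑ S ∈ Tᶜ.powerset, (if S ⊆ T' then (-1 : R) ^ S.card • zmon R u T' else 0) :=
          Finset.sum_comm
      _ = ∑ T' ∈ Finset.powersetCard t (Finset.univ : Finset (Fin u)),
            (if Tᶜ ∩ T' = ∅ then (1 : R) else 0) • zmon R u T' := by
          refine Finset.sum_congr rfl fun T' _ => ?_
          rw [← Finset.sum_filter]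
          have hfe : Tᶜ.powerset.filter (fun S => S ⊆ T') = (Tᶜ ∩ T').powerset := by
            ext S
            simp only [Finset.mem_filter, Finset.mem_powerset, Finset.subset_inter_iff]
          rw [hfe, ← Finset.sum_smul, neg_one_pow_sum]
      _ = zmon R u T := by
          have h1 : T ∈ Finset.powersetCard t (Finset.univ : Finset (Fin u)) := by
            rw [Finset.mem_powersetCard]
            exact ⟨Finset.subset_univ _, rfl⟩
          have h2 : ∀ T' ∈ Finset.powersetCard t (Finset.univ : Finset (Fin u)), T' ≠ T →
              (if Tᶜ ∩ T' = ∅ then (1 : R) else 0) • zmon R u T' = 0 := by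
            intro T' hT' hne
            rw [Finset.mem_powersetCard] at hT'
            have : Tᶜ ∩ T' ≠ ∅ := by
              intro he
              have hsub : T' ⊆ T := by
                intro i hi
                by_contra hiT
                exact (Finset.eq_empty_iff_forall_notMem.mp he i)
                  (Finset.mem_inter.mpr ⟨Finset.mem_compl.mpr hiT, hi⟩)
              exact hne (Finset.eq_of_subset_of_card_le hsub (by omega))
            rw [if_neg this, zero_smul]
          rw [Finset.sum_eq_single_of_mem T h1 h2, if_pos (by ext i; simp), one_smul]
  rw [← key]
  refine Submodule.sum_mem _ fun S hS => ?_
  refine Submodule.smul_mem _ _ (Submodule.subset_span ?_)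
  refine ⟨t - S.card, S, ?_, rfl⟩
  have hSc := Finset.card_le_card (Finset.mem_powerset.mp hS)
  rw [hTc] at hSc
  omega

end
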